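/- For each fixed positive integer t there exists N such that for all n ≥ N, B̃_{n-t-1} > ∑_{k=⌊n/(t+1)+t-1⌋+1}^{n} C(n,k) · B̃_{n-k}. -/

import Mathlib

/-- A set partition of `Fin n`, modelled as a finite set of blocks. -/
def IsSetPartition {n : ℕ} (P : Finset (Finset (Fin n))) : Prop :=
  (∀ b ∈ P, b.Nonempty) ∧ (∀ b ∈ P, ∀ c ∈ P, b ≠ c → Disjoint b c) ∧
    P.sup id = Finset.univ

/-- The `n`-th Bell number: the number of set partitions of an `n`-element set. -/
noncomputable def bell (n : ℕ) : ℕ :=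
  Set.ncard {P : Finset (Finset (Fin n)) | IsSetPartition P}

/-- The number of singleton-free set partitions of an `n`-element set. -/
noncomputable def bellT (n : ℕ) : ℕ :=
  Set.ncard {P : Finset (Finset (Fin n)) | IsSetPartition P ∧ ∀ b ∈ P, 2 ≤ b.card}

namespace BellTAux

def SF (n : ℕ) : Set (Finset (Finset (Fin n))) :=
  {P : Finset (Finset (Fin n)) | IsSetPartition P ∧ ∀ b ∈ P, 2 ≤ b.card}

lemma bellT_eq (n : ℕ) : bellT n = (SF n).ncard := rfl

/-! ### Lemma A : `(a+1) * bellT a ≤ bellT (a+2)` -/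

def eA {a : ℕ} (x : Fin (a + 1)) : Fin a ↪ Fin (a + 2) :=
  ⟨fun j => (x.succAbove j).castSucc, fun i j h =>
    Fin.succAbove_right_injective (Fin.castSucc_injective _ h)⟩

lemma last_not_mem_eA {a : ℕ} (x : Fin (a + 1)) (b : Finset (Fin a)) :
    Fin.last (a + 1) ∉ b.map (eA x) := by
  simp only [Finset.mem_map, eA, Function.Embedding.coeFn_mk]
  rintro ⟨j, hj, h⟩
  exact (Fin.castSucc_lt_last _).ne h

lemma castSucc_not_mem_eA {a : ℕ} (x : Fin (a + 1)) (b : Finset (Fin a)) :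
    x.castSucc ∉ b.map (eA x) := by
  simp only [Finset.mem_map, eA, Function.Embedding.coeFn_mk]
  rintro ⟨j, hj, h⟩
  exact Fin.succAbove_ne x j (Fin.castSucc_injective _ h)

def EA {a : ℕ} (x : Fin (a + 1)) : Finset (Fin a) ↪ Finset (Fin (a + 2)) :=
  ⟨fun b => b.map (eA x), Finset.map_injective _⟩

def FA {a : ℕ} (x : Fin (a + 1)) (P : Finset (Finset (Fin a))) :
    Finset (Finset (Fin (a + 2))) :=
  insert {x.castSucc, Fin.last (a + 1)} (P.map (EA x))

lemma special_not_mem {a : ℕ} (x y : Fin (a + 1)) (P : Finset (Finset (Fin a))) :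
    ({y.castSucc, Fin.last (a + 1)} : Finset (Fin (a + 2))) ∉ P.map (EA x) := by
  intro h
  rcases Finset.mem_map.1 h with ⟨c, hc, hc'⟩
  apply last_not_mem_eA x c
  show Fin.last (a + 1) ∈ c.map (eA x)
  have : (EA x) c = c.map (eA x) := rfl
  rw [this] at hc'
  rw [hc']
  simp

lemma FA_mem {a : ℕ} (x : Fin (a + 1)) {P : Finset (Finset (Fin a))}
    (hP : P ∈ SF a) : FA x P ∈ SF (a + 2) := by
  obtain ⟨⟨hne, hdis, hsup⟩, hcard⟩ := hP
  have hxl : x.castSucc ≠ Fin.last (a + 1) := (Fin.castSucc_lt_last x).ne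
  refine ⟨⟨?_, ?_, ?_⟩, ?_⟩
  · intro b hb
    rcases Finset.mem_insert.1 hb with rfl | hb
    · exact ⟨_, Finset.mem_insert_self _ _⟩
    · rcases Finset.mem_map.1 hb with ⟨c, hc, rfl⟩
      exact Finset.map_nonempty.2 (hne c hc)
  · intro b hb c hc hbc
    rcases Finset.mem_insert.1 hb with rfl | hb
    · rcases Finset.mem_insert.1 hc with rfl | hc
      · exact absurd rfl hbc
      · rcases Finset.mem_map.1 hc with ⟨c₀, hc₀, rfl⟩
        rw [Finset.disjoint_left]
        intro z hz
        rcases Finset.mem_insert.1 hz with rfl | hz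
        · exact castSucc_not_mem_eA x c₀
        · rw [Finset.mem_singleton] at hz
          subst hz
          exact last_not_mem_eA x c₀
    · rcases Finset.mem_insert.1 hc with rfl | hc
      · rcases Finset.mem_map.1 hb with ⟨b₀, hb₀, rfl⟩
        rw [Finset.disjoint_right]
        intro z hz
        rcases Finset.mem_insert.1 hz with rfl | hz
        · exact castSucc_not_mem_eA x b₀
        · rw [Finset.mem_singleton] at hz
          subst hz
          exact last_not_mem_eA x b₀
      · rcases Finset.mem_map.1 hb with ⟨b₀, hb₀, rfl⟩
        rcases Finset.mem_map.1 hc with ⟨c₀, hc₀, rfl⟩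
        have hb₀c₀ : b₀ ≠ c₀ := fun h => hbc (by rw [h])
        exact (Finset.disjoint_map (eA x)).2 (hdis b₀ hb₀ c₀ hc₀ hb₀c₀)
  · rw [Finset.eq_univ_iff_forall]
    intro y
    rw [Finset.mem_sup]
    by_cases hyl : y = Fin.last (a + 1)
    · exact ⟨_, Finset.mem_insert_self _ _, by
        subst hyl; simp⟩
    by_cases hyx : y = x.castSucc
    · exact ⟨_, Finset.mem_insert_self _ _, by
        subst hyx; simp⟩
    · obtain ⟨z, rfl⟩ : ∃ z : Fin (a + 1), z.castSucc = y :=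
        ⟨y.castPred hyl, Fin.castSucc_castPred _ _⟩
      have hz : z ≠ x := fun h => hyx (by rw [h])
      obtain ⟨j, hj⟩ := Fin.exists_succAbove_eq hz
      have hjm : j ∈ P.sup id := hsup ▸ Finset.mem_univ j
      obtain ⟨b, hb, hjb⟩ := Finset.mem_sup.1 hjm
      refine ⟨(EA x) b, Finset.mem_insert_of_mem (Finset.mem_map_of_mem _ hb), ?_⟩
      show z.castSucc ∈ b.map (eA x)
      rw [Finset.mem_map]
      exact ⟨j, hjb, by show (x.succAbove j).castSucc = z.castSucc; rw [hj]⟩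
  · intro b hb
    rcases Finset.mem_insert.1 hb with rfl | hb
    · rw [Finset.card_insert_of_notMem (by simp [hxl]), Finset.card_singleton]
    · rcases Finset.mem_map.1 hb with ⟨c, hc, rfl⟩
      show 2 ≤ (c.map (eA x)).card
      rw [Finset.card_map]
      exact hcard c hc

lemma FA_inj {a : ℕ} :
    Function.Injective
      (fun p : Fin (a + 1) × Finset (Finset (Fin a)) => FA p.1 p.2) := by
  rintro ⟨x, P⟩ ⟨y, Q⟩ h
  simp only [FA] at h
  have hxl : x.castSucc ≠ Fin.last (a + 1) := (Fin.castSucc_lt_last x).ne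
  have hsx : ({x.castSucc, Fin.last (a + 1)} : Finset (Fin (a + 2)))
      = {y.castSucc, Fin.last (a + 1)} := by
    have hmem : ({x.castSucc, Fin.last (a + 1)} : Finset (Fin (a + 2)))
        ∈ insert ({y.castSucc, Fin.last (a + 1)} : Finset (Fin (a + 2)))
          (Q.map (EA y)) := h ▸ Finset.mem_insert_self _ _
    rcases Finset.mem_insert.1 hmem with h' | h'
    · exact h'
    · exact absurd h' (special_not_mem y x Q)
  have hxy : x = y := by
    have hx : x.castSucc ∈ ({y.castSucc, Fin.last (a + 1)} : Finset (Fin (a + 2))) := by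
      rw [← hsx]; exact Finset.mem_insert_self _ _
    rcases Finset.mem_insert.1 hx with h' | h'
    · exact Fin.castSucc_injective _ h'
    · rw [Finset.mem_singleton] at h'
      exact absurd h' hxl
  subst hxy
  rw [hsx] at h
  have hPQ : P.map (EA x) = Q.map (EA x) := by
    rw [← Finset.erase_insert (special_not_mem x x P), ← hsx, h, hsx,
      Finset.erase_insert (special_not_mem x x Q)]
  rw [Finset.map_injective _ hPQ]

lemma lemA (a : ℕ) : (a + 1) * bellT a ≤ bellT (a + 2) := by
  rw [bellT_eq, bellT_eq]
  have h1 : ((Set.univ : Set (Fin (a + 1))) ×ˢ SF a).ncard = (a + 1) * (SF a).ncard := by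
    rw [← Nat.card_coe_set_eq, Nat.card_congr (Equiv.Set.prod _ _), Nat.card_prod,
      Nat.card_coe_set_eq, Nat.card_coe_set_eq, Set.ncard_univ,
      Nat.card_eq_fintype_card, Fintype.card_fin]
  rw [← h1]
  exact Set.ncard_le_ncard_of_injOn (fun p => FA p.1 p.2)
    (fun p hp => FA_mem p.1 hp.2) FA_inj.injOn (Set.toFinite _)

/-! ### Lemma B : `bellT (a+1) ≤ bellT (a+2)` -/

def phiB {a : ℕ} (b : Finset (Fin (a + 1))) : Finset (Fin (a + 2)) :=
  if (0 : Fin (a + 1)) ∈ b then insert (Fin.last (a + 1)) (b.map Fin.castSuccEmb)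
  else b.map Fin.castSuccEmb

lemma last_not_mem_map {a : ℕ} (b : Finset (Fin (a + 1))) :
    Fin.last (a + 1) ∉ b.map Fin.castSuccEmb := by
  simp only [Finset.mem_map, Fin.castSuccEmb]
  rintro ⟨j, hj, h⟩
  exact (Fin.castSucc_lt_last j).ne h

lemma phiB_erase {a : ℕ} (b : Finset (Fin (a + 1))) :
    (phiB b).erase (Fin.last (a + 1)) = b.map Fin.castSuccEmb := by
  unfold phiB
  split
  · exact Finset.erase_insert (last_not_mem_map b)
  · exact Finset.erase_eq_of_notMem (last_not_mem_map b)

lemma phiB_inj {a : ℕ} : Function.Injective (phiB (a := a)) := fun b c h =>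
  Finset.map_injective _ (by rw [← phiB_erase b, h, phiB_erase])

lemma map_subset_phiB {a : ℕ} (b : Finset (Fin (a + 1))) :
    b.map Fin.castSuccEmb ⊆ phiB b := by
  unfold phiB
  split
  · exact Finset.subset_insert _ _
  · exact Finset.Subset.refl _

lemma GB_mem {a : ℕ} {P : Finset (Finset (Fin (a + 1)))} (hP : P ∈ SF (a + 1)) :
    P.map ⟨phiB, phiB_inj⟩ ∈ SF (a + 2) := by
  obtain ⟨⟨hne, hdis, hsup⟩, hcard⟩ := hP
  refine ⟨⟨?_, ?_, ?_⟩, ?_⟩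
  · intro b hb
    rcases Finset.mem_map.1 hb with ⟨c, hc, rfl⟩
    exact (hne c hc).map.mono (map_subset_phiB c)
  · intro b hb c hc hbc
    rcases Finset.mem_map.1 hb with ⟨b₀, hb₀, rfl⟩
    rcases Finset.mem_map.1 hc with ⟨c₀, hc₀, rfl⟩
    have hb₀c₀ : b₀ ≠ c₀ := fun h => hbc (by rw [h])
    have hd : Disjoint (b₀.map Fin.castSuccEmb) (c₀.map Fin.castSuccEmb) :=
      (Finset.disjoint_map _).2 (hdis b₀ hb₀ c₀ hc₀ hb₀c₀)
    show Disjoint (phiB b₀) (phiB c₀)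
    unfold phiB
    by_cases h0b : (0 : Fin (a + 1)) ∈ b₀ <;> by_cases h0c : (0 : Fin (a + 1)) ∈ c₀
    · exact absurd h0c (Finset.disjoint_left.1 (hdis b₀ hb₀ c₀ hc₀ hb₀c₀) h0b)
    · rw [if_pos h0b, if_neg h0c, Finset.disjoint_insert_left]
      exact ⟨last_not_mem_map c₀, hd⟩
    · rw [if_neg h0b, if_pos h0c, Finset.disjoint_insert_right]
      exact ⟨last_not_mem_map b₀, hd⟩
    · rw [if_neg h0b, if_neg h0c]
      exact hd
  · rw [Finset.eq_univ_iff_forall]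
    intro y
    rw [Finset.mem_sup]
    by_cases hyl : y = Fin.last (a + 1)
    · have h0 : (0 : Fin (a + 1)) ∈ P.sup id := hsup ▸ Finset.mem_univ _
      obtain ⟨b, hb, h0b⟩ := Finset.mem_sup.1 h0
      refine ⟨phiB b, Finset.mem_map_of_mem _ hb, ?_⟩
      subst hyl
      show Fin.last (a + 1) ∈ phiB b
      unfold phiB
      rw [if_pos (show (0 : Fin (a + 1)) ∈ b from h0b)]
      exact Finset.mem_insert_self _ _
    · obtain ⟨z, rfl⟩ : ∃ z : Fin (a + 1), z.castSucc = y :=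
        ⟨y.castPred hyl, Fin.castSucc_castPred _ _⟩
      have hz : z ∈ P.sup id := hsup ▸ Finset.mem_univ _
      obtain ⟨b, hb, hzb⟩ := Finset.mem_sup.1 hz
      refine ⟨phiB b, Finset.mem_map_of_mem _ hb, ?_⟩
      exact map_subset_phiB b (Finset.mem_map_of_mem _ hzb)
  · intro b hb
    rcases Finset.mem_map.1 hb with ⟨c, hc, rfl⟩
    calc 2 ≤ c.card := hcard c hc
      _ = (c.map Fin.castSuccEmb).card := (Finset.card_map _).symm
      _ ≤ (phiB c).card := Finset.card_le_card (map_subset_phiB c)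

lemma stepB (a : ℕ) : bellT (a + 1) ≤ bellT (a + 2) := by
  rw [bellT_eq, bellT_eq]
  exact Set.ncard_le_ncard_of_injOn (fun P => P.map ⟨phiB, phiB_inj⟩)
    (fun P hP => GB_mem hP)
    ((Finset.map_injective _).injOn) (Set.toFinite _)

/-! ### small values and monotonicity -/

lemma bellT_pos {a : ℕ} (ha : 2 ≤ a) : 1 ≤ bellT a := by
  rw [bellT_eq, Nat.one_le_iff_ne_zero, ← Nat.pos_iff_ne_zero,
    Set.ncard_pos (Set.toFinite _)]
  have : Nonempty (Fin a) := Fin.pos_iff_nonempty.1 (by omega)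
  refine ⟨{Finset.univ}, ⟨⟨?_, ?_, ?_⟩, ?_⟩⟩
  · intro b hb
    rw [Finset.mem_singleton] at hb
    subst hb
    exact Finset.univ_nonempty
  · intro b hb c hc hbc
    rw [Finset.mem_singleton] at hb hc
    exact absurd (hb.trans hc.symm) hbc
  · rw [Finset.sup_singleton]
    rfl
  · intro b hb
    rw [Finset.mem_singleton] at hb
    subst hb
    rw [Finset.card_univ, Fintype.card_fin]
    exact ha

lemma bellT_zero_le : bellT 0 ≤ 1 := by
  rw [bellT_eq]
  have hsub : SF 0 ⊆ {∅} := by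
    intro P hP
    simp only [Set.mem_singleton_iff]
    rw [Finset.eq_empty_iff_forall_notMem]
    intro b hb
    obtain ⟨x, -⟩ := hP.1.1 b hb
    exact x.elim0
  calc (SF 0).ncard ≤ ({∅} : Set (Finset (Finset (Fin 0)))).ncard :=
        Set.ncard_le_ncard hsub (Set.toFinite _)
    _ = 1 := Set.ncard_singleton _

lemma mono1 {c b : ℕ} (hc : 1 ≤ c) (hcb : c ≤ b) : bellT c ≤ bellT b := by
  induction b, hcb using Nat.le_induction with
  | base => exact le_rfl
  | succ n hn ih =>
    refine ih.trans ?_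
    obtain ⟨m, rfl⟩ : ∃ m, n = m + 1 := ⟨n - 1, by omega⟩
    exact stepB m

lemma mono {c b : ℕ} (hcb : c ≤ b) (hb : 2 ≤ b) : bellT c ≤ bellT b := by
  rcases Nat.eq_zero_or_pos c with rfl | hc
  · exact bellT_zero_le.trans (bellT_pos hb)
  · exact mono1 hc hcb

lemma chain : ∀ (g a : ℕ), 1 ≤ a → (a + 1) ^ (g / 2) * bellT a ≤ bellT (a + g)
  | 0, a, _ => by simpa using le_rfl
  | 1, a, ha => by simpa using mono1 ha (Nat.le_succ a)
  | (g + 2), a, ha => by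
    have ih := chain g a ha
    have h2 : (g + 2) / 2 = g / 2 + 1 := by omega
    calc (a + 1) ^ ((g + 2) / 2) * bellT a
        = (a + 1) * ((a + 1) ^ (g / 2) * bellT a) := by rw [h2, pow_succ]; ring
      _ ≤ (a + 1) * bellT (a + g) := Nat.mul_le_mul_left _ ih
      _ ≤ (a + g + 1) * bellT (a + g) := Nat.mul_le_mul_right _ (by omega)
      _ ≤ bellT (a + g + 2) := lemA (a + g)
      _ = bellT (a + (g + 2)) := by rw [show a + g + 2 = a + (g + 2) from by omega]

lemma choose_le_two_pow {n k : ℕ} (hk : k ≤ n) : n.choose k ≤ 2 ^ n := by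
  calc n.choose k ≤ ∑ m ∈ Finset.range (n + 1), n.choose m :=
        Finset.single_le_sum (fun _ _ => Nat.zero_le _) (Finset.mem_range.2 (by omega))
    _ = 2 ^ n := Nat.sum_range_choose n

end BellTAux

open BellTAux

theorem bellT_gt_tail_sum (t : ℕ) (ht : 0 < t) :
    ∃ N : ℕ, ∀ n ≥ N,
      bellT (n - t - 1) >
        ∑ k ∈ Finset.Icc (n / (t + 1) + t - 1 + 1) n, n.choose k * bellT (n - k) := by
  refine ⟨2 * 2 ^ (8 * (t + 1)) + 30 * (t + 1) + 30, fun n hn => ?_⟩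
  set K := 2 ^ (8 * (t + 1)) with hK
  set q := n / (t + 1) with hq
  have hw1 : (t + 1) * q + n % (t + 1) = n := Nat.div_add_mod n (t + 1)
  have hw2 : n % (t + 1) < t + 1 := Nat.mod_lt _ (by omega)
  have hq2 : 2 * q ≤ (t + 1) * q := Nat.mul_le_mul_right q (by omega)
  have hqn : 2 * q ≤ n := by omega
  have hq1 : 1 ≤ q := by
    rw [hq]
    exact (Nat.one_le_div_iff (by omega)).2 (by omega)
  set a := n - q - t with ha
  have ha2 : 2 ≤ a := by omega
  have ha1 : 1 ≤ a := by omega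
  have haK : K ≤ a + 1 := by omega
  have h5 : q - 2 ≤ 2 * ((q - 1) / 2) := by omega
  have h6 : (t + 1) * (q - 2) ≤ (t + 1) * (2 * ((q - 1) / 2)) := Nat.mul_le_mul_left _ h5
  have h7 : (t + 1) * q ≤ (t + 1) * (q - 2) + (t + 1) * 2 := by
    rw [← Nat.mul_add]
    exact Nat.mul_le_mul_left _ (by omega)
  have h8 : 8 * (t + 1) * ((q - 1) / 2) = 4 * ((t + 1) * (2 * ((q - 1) / 2))) := by ring
  have hexp : 2 * n ≤ 8 * (t + 1) * ((q - 1) / 2) := by omega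
  have hidx : q + t - 1 + 1 = q + t := by omega
  rw [hidx]
  have hba : 0 < bellT a := bellT_pos ha2
  calc ∑ k ∈ Finset.Icc (q + t) n, n.choose k * bellT (n - k)
      ≤ (Finset.Icc (q + t) n).card • (2 ^ n * bellT a) := by
        refine Finset.sum_le_card_nsmul _ _ _ (fun k hk => ?_)
        rw [Finset.mem_Icc] at hk
        exact Nat.mul_le_mul (choose_le_two_pow hk.2) (mono (by omega) ha2)
    _ = (Finset.Icc (q + t) n).card * (2 ^ n * bellT a) := by rw [smul_eq_mul]
    _ ≤ n * (2 ^ n * bellT a) := Nat.mul_le_mul_right _ (by rw [Nat.card_Icc]; omega)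
    _ = (n * 2 ^ n) * bellT a := by ring
    _ < (2 ^ n * 2 ^ n) * bellT a := by
        have h1 : n * 2 ^ n < 2 ^ n * 2 ^ n :=
          mul_lt_mul_of_pos_right (Nat.lt_two_pow_self (n := n)) (pow_pos two_pos n)
        exact mul_lt_mul_of_pos_right h1 hba
    _ ≤ (a + 1) ^ ((q - 1) / 2) * bellT a := by
        refine Nat.mul_le_mul_right _ ?_
        calc 2 ^ n * 2 ^ n = 2 ^ (2 * n) := by rw [two_mul, pow_add]
          _ ≤ 2 ^ (8 * (t + 1) * ((q - 1) / 2)) := Nat.pow_le_pow_right (by norm_num) hexp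
          _ = K ^ ((q - 1) / 2) := by rw [hK, ← pow_mul]
          _ ≤ (a + 1) ^ ((q - 1) / 2) := Nat.pow_le_pow_left haK _
    _ ≤ bellT (a + (q - 1)) := chain (q - 1) a ha1
    _ = bellT (n - t - 1) := by rw [show a + (q - 1) = n - t - 1 from by omega]
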